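/- Let n and k be natural numbers with gcd(k, n) = 1, and let F : 𝔽_{2ⁿ} → 𝔽_{2ⁿ} be the Gold function F(x) = x^{2^k + 1}. Then for all a, α, b ∈ 𝔽_{2ⁿ} with b ≠ F(a), one has d_{G_F}(a, b) = d_{G_F}(α, b + F(a) + F(α)); that is, the exclude distribution of G_F is uniform on the partition {{a} × (𝔽_{2ⁿ} ∖ {F(a)}) : a ∈ 𝔽_{2ⁿ}} of (𝔽_{2ⁿ} × 𝔽_{2ⁿ}) ∖ G_F. -/
import Mathlib


/-- The finite field `𝔽_{2ⁿ}` is finite, so we may fix a `Fintype` structure on it. -/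
noncomputable instance (n : ℕ) : Fintype (GaloisField 2 n) := Fintype.ofFinite _

noncomputable instance (n : ℕ) : DecidableEq (GaloisField 2 n) := Classical.decEq _

/-- The graph `G_F = {(x, F(x)) : x ∈ 𝔽_{2ⁿ}}` of `F`, as a finite set. -/
noncomputable def graphF {K : Type*} [Fintype K] [DecidableEq K] (F : K → K) :
    Finset (K × K) :=
  Finset.univ.image (fun x => (x, F x))

/-- The exclude multiplicity of `y` w.r.t. `S`: the number of 3-element subsets of `S`
whose elements sum to `y`. -/
noncomputable def excMult {G : Type*} [AddCommGroup G] [DecidableEq G] (S : Finset G)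
    (y : G) : ℕ :=
  ((S.powersetCard 3).filter (fun T => T.sum id = y)).card

/-- Auxiliary lemma: the exclude multiplicity of the graph of a Gold-type function
over a field of characteristic two is invariant under the affine symmetry induced by
translation by `c`. -/
lemma gold_exclude_shift {K : Type*} [Field K] [Fintype K] [DecidableEq K] [CharP K 2]
    (k : ℕ) (F : K → K) (hF : ∀ x, F x = x ^ (2 ^ k + 1)) (c : K) (y : K × K) :
    excMult (graphF F) y =
      excMult (graphF F)
        (y.1 + c, y.2 + y.1 ^ (2 ^ k) * c + y.1 * c ^ (2 ^ k) + c ^ (2 ^ k) * c) := by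
  classical
  have h2 : (2 : K) = 0 := by
    have := CharP.cast_eq_zero K 2
    exact_mod_cast this
  have hfrob : ∀ x z : K, (x + z) ^ (2 ^ k) = x ^ (2 ^ k) + z ^ (2 ^ k) := fun x z =>
    add_pow_char_pow x z 2 k
  set φ : K × K → K × K := fun p =>
    (p.1 + c, p.2 + p.1 ^ (2 ^ k) * c + p.1 * c ^ (2 ^ k) + c ^ (2 ^ k) * c) with hφ
  -- φ is an involution
  have hinv : ∀ p, φ (φ p) = p := by
    rintro ⟨u, v⟩
    simp only [hφ]
    refine Prod.ext ?_ ?_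
    · simp only
      linear_combination c * h2
    · simp only [hfrob]
      linear_combination (u ^ (2 ^ k) * c + u * c ^ (2 ^ k) + 2 * (c ^ (2 ^ k) * c)) * h2
  have hφinj : Function.Injective φ := Function.LeftInverse.injective hinv
  -- φ maps graph points to graph points
  have hφF : ∀ x : K, φ (x, F x) = (x + c, F (x + c)) := by
    intro x
    simp only [hφ]
    refine Prod.ext rfl ?_
    simp only [hF, hfrob, pow_succ]
    ring
  have hgraph : ∀ p ∈ graphF F, φ p ∈ graphF F := by
    intro p hp
    simp only [graphF, Finset.mem_image, Finset.mem_univ, true_and] at hp ⊢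
    obtain ⟨x, rfl⟩ := hp
    exact ⟨x + c, (hφF x).symm⟩
  -- φ is "affine" on triples
  have htriple : ∀ p q r : K × K, φ p + φ q + φ r = φ (p + q + r) := by
    rintro ⟨u1, v1⟩ ⟨u2, v2⟩ ⟨u3, v3⟩
    simp only [hφ, Prod.mk_add_mk]
    refine Prod.ext ?_ ?_
    · simp only
      linear_combination c * h2
    · simp only [hfrob]
      linear_combination (c ^ (2 ^ k) * c) * h2
  -- sums of 3-element sets
  have hsum3 : ∀ T : Finset (K × K), T.card = 3 →
      (T.image φ).sum id = φ (T.sum id) := by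
    intro T hT
    rw [Finset.sum_image (fun x _ z _ h => hφinj h)]
    obtain ⟨p, q, r, hpq, hpr, hqr, rfl⟩ := Finset.card_eq_three.mp hT
    rw [Finset.sum_insert (by simp [hpq, hpr]),
      Finset.sum_insert (by simp [hqr]), Finset.sum_singleton,
      Finset.sum_insert (by simp [hpq, hpr]),
      Finset.sum_insert (by simp [hqr]), Finset.sum_singleton]
    simp only [id]
    rw [← add_assoc, ← add_assoc, htriple]
  have hcomp : φ ∘ φ = id := funext hinv
  -- cardinality bijection
  unfold excMult
  refine Finset.card_bij' (fun T _ => T.image φ) (fun T _ => T.image φ) ?_ ?_ ?_ ?_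
  · intro T hT
    simp only [Finset.mem_filter, Finset.mem_powersetCard] at hT ⊢
    obtain ⟨⟨hsub, hcard⟩, hsum⟩ := hT
    refine ⟨⟨fun z hz => ?_, ?_⟩, ?_⟩
    · obtain ⟨x, hx, rfl⟩ := Finset.mem_image.mp hz
      exact hgraph x (hsub hx)
    · rw [Finset.card_image_of_injective _ hφinj, hcard]
    · rw [hsum3 T hcard, hsum]
  · intro T hT
    simp only [Finset.mem_filter, Finset.mem_powersetCard] at hT ⊢
    obtain ⟨⟨hsub, hcard⟩, hsum⟩ := hT
    refine ⟨⟨fun z hz => ?_, ?_⟩, ?_⟩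
    · obtain ⟨x, hx, rfl⟩ := Finset.mem_image.mp hz
      exact hgraph x (hsub hx)
    · rw [Finset.card_image_of_injective _ hφinj, hcard]
    · rw [hsum3 T hcard, hsum]
      exact hinv y
  · intro T hT
    simp only [Finset.image_image, hcomp, Finset.image_id]
  · intro T hT
    simp only [Finset.image_image, hcomp, Finset.image_id]

/-- For the Gold function `F(x) = x^(2^k + 1)` on `𝔽_{2ⁿ}` with
`gcd(k, n) = 1`: for all `a, α, b` with `b ≠ F a`,
`d_{G_F}(a, b) = d_{G_F}(α, b + F a + F α)`; i.e., the exclude distribution of `G_F` is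
uniform on the partition `{{a} × (𝔽_{2ⁿ} ∖ {F a}) : a ∈ 𝔽_{2ⁿ}}` of the complement of
the graph. -/
theorem gold_uniform_exclude (n k : ℕ) (hk : Nat.gcd k n = 1)
    (F : GaloisField 2 n → GaloisField 2 n) (hF : ∀ x, F x = x ^ (2 ^ k + 1))
    (a α b : GaloisField 2 n) (hb : b ≠ F a) :
    excMult (graphF F) (a, b) = excMult (graphF F) (α, b + F a + F α) := by
  classical
  have h2 : (2 : GaloisField 2 n) = 0 := by
    have := CharP.cast_eq_zero (GaloisField 2 n) 2
    exact_mod_cast this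
  have hfrob : ∀ x z : GaloisField 2 n,
      (x + z) ^ (2 ^ k) = x ^ (2 ^ k) + z ^ (2 ^ k) := fun x z => add_pow_char_pow x z 2 k
  have key := gold_exclude_shift k F hF (a + α) (a, b)
  rw [key]
  congr 1
  refine Prod.ext ?_ ?_
  · simp only
    linear_combination a * h2
  · simp only [hF, hfrob, pow_succ]
    linear_combination (a ^ (2 ^ k) * a + a ^ (2 ^ k) * α + a * α ^ (2 ^ k)) * h2
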